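/- Let f be the exponential generating function of the Catalan numbers. Then f(t)·√(−π t) tends to 1 as t → −∞; that is, f(t) is asymptotic to 1/√(−π t) as t → −∞. -/

import Mathlib

open scoped Nat
open MeasureTheory Set Filter

/-- The exponential generating function of the Catalan numbers. -/
noncomputable def catalanEGF (t : ℝ) : ℝ := ∑' n : ℕ, (catalan n : ℝ) * t ^ n / n !

namespace CatalanAsympt

lemma gamma_nat_add_half (n : ℕ) :
    Real.Gamma ((n : ℝ) + 1/2) = (2*n)! * Real.sqrt Real.pi / (4^n * n !) := by
  induction n with
  | zero =>
      rw [show ((0:ℕ):ℝ) + 1/2 = 1/2 by norm_num, Real.Gamma_one_half_eq]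
      norm_num
  | succ n ih =>
      have h : (((n:ℕ)+1 : ℕ):ℝ) + 1/2 = ((n:ℝ) + 1/2) + 1 := by push_cast; ring
      rw [h, Real.Gamma_add_one (by positivity), ih]
      have h2 : (2*(n+1))! = (2*n+2) * ((2*n+1) * (2*n)!) := by
        have : 2*(n+1) = (2*n+1) + 1 := by ring
        rw [this, Nat.factorial_succ, Nat.factorial_succ]
      rw [h2, Nat.factorial_succ]
      have h4 : (4:ℝ)^(n+1) = 4 * 4^n := by ring
      rw [h4]
      have hn : (0:ℝ) < (n ! : ℝ) := by positivity
      push_cast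
      field_simp
      ring

lemma catalan_mul_factorial (n : ℕ) : catalan n * n ! * (n+1)! = (2*n)! := by
  have h1 := succ_mul_catalan_eq_centralBinom n
  have h2 := Nat.choose_mul_factorial_mul_factorial (show n ≤ 2*n by omega)
  rw [Nat.centralBinom] at h1
  have h3 : 2*n - n = n := by omega
  rw [h3] at h2
  calc catalan n * n ! * (n+1)! = ((n+1) * catalan n) * n ! * n ! := by
        rw [Nat.factorial_succ]; ring
    _ = (2*n).choose n * n ! * n ! := by rw [h1]
    _ = (2*n)! := h2

lemma beta_val (n : ℕ) :
    ∫ u in Ioc (0:ℝ) 1, u ^ ((n:ℝ) - 1/2) * (1-u) ^ ((1:ℝ)/2) =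
      Real.pi * catalan n / (2 * 4^n) := by
  set B := ∫ u in Ioc (0:ℝ) 1, u ^ ((n:ℝ) - 1/2) * (1-u) ^ ((1:ℝ)/2) with hBdef
  have hs : (0:ℝ) < (n:ℝ) + 1/2 := by positivity
  have hs' : 0 < Complex.re ((((n:ℝ) + 1/2 : ℝ)) : ℂ) := by simpa using hs
  have ht' : 0 < Complex.re (((3/2 : ℝ)) : ℂ) := by norm_num
  have h := Complex.Gamma_mul_Gamma_eq_betaIntegral hs' ht'
  have hbeta : Complex.betaIntegral (((n:ℝ) + 1/2 : ℝ) : ℂ) ((3/2 : ℝ) : ℂ) = (B : ℂ) := by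
    rw [Complex.betaIntegral, intervalIntegral.integral_of_le (by norm_num : (0:ℝ) ≤ 1)]
    have e1 : ((((n:ℝ) + 1/2 : ℝ)) : ℂ) - 1 = (((n:ℝ) - 1/2 : ℝ) : ℂ) := by push_cast; ring
    have e2 : (((3/2 : ℝ)) : ℂ) - 1 = (((1:ℝ)/2 : ℝ) : ℂ) := by push_cast; ring
    calc ∫ x in Ioc (0:ℝ) 1, (x:ℂ) ^ ((((n:ℝ) + 1/2 : ℝ) : ℂ) - 1)
            * ((1:ℂ)-(x:ℂ)) ^ ((((3/2:ℝ)) : ℂ) - 1)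
        = ∫ x in Ioc (0:ℝ) 1, ((x ^ ((n:ℝ) - 1/2) * (1-x) ^ ((1:ℝ)/2) : ℝ) : ℂ) := by
          refine setIntegral_congr_fun measurableSet_Ioc (fun x hx => ?_)
          have hx0 : (0:ℝ) ≤ x := le_of_lt hx.1
          have hx1 : (0:ℝ) ≤ 1 - x := by linarith [hx.2]
          rw [e1, e2, ← Complex.ofReal_cpow hx0, ← Complex.ofReal_one,
            ← Complex.ofReal_sub, ← Complex.ofReal_cpow hx1, ← Complex.ofReal_mul]
      _ = (B : ℂ) := by rw [hBdef]; exact integral_ofReal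
  have hGs : Complex.Gamma (((n:ℝ) + 1/2 : ℝ) : ℂ) = ((Real.Gamma ((n:ℝ) + 1/2) : ℝ) : ℂ) :=
    Complex.Gamma_ofReal _
  have hGt : Complex.Gamma (((3/2 : ℝ)) : ℂ) = ((Real.Gamma (3/2) : ℝ) : ℂ) :=
    Complex.Gamma_ofReal _
  have hsum : (((n:ℝ) + 1/2 : ℝ) : ℂ) + ((3/2 : ℝ) : ℂ) = ((n:ℕ) + 1 : ℕ) + 1 := by
    push_cast; ring
  have hGsum : Complex.Gamma ((((n:ℝ) + 1/2 : ℝ) : ℂ) + ((3/2 : ℝ) : ℂ)) =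
      (((n+1)! : ℕ) : ℂ) := by
    rw [hsum, Complex.Gamma_nat_eq_factorial]
  rw [hGs, hGt, hGsum, hbeta] at h
  have hreal : Real.Gamma ((n:ℝ) + 1/2) * Real.Gamma (3/2) = ((n+1)! : ℝ) * B := by
    exact_mod_cast h
  have hG32 : Real.Gamma (3/2:ℝ) = Real.sqrt Real.pi / 2 := by
    rw [show (3/2:ℝ) = 1/2 + 1 by norm_num, Real.Gamma_add_one (by norm_num),
      Real.Gamma_one_half_eq]
    ring
  rw [gamma_nat_add_half, hG32] at hreal
  have hcat : ((2*n)! : ℝ) = (catalan n : ℝ) * (n ! : ℝ) * ((n+1)! : ℝ) := by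
    exact_mod_cast (catalan_mul_factorial n).symm
  have hpi : Real.sqrt Real.pi * Real.sqrt Real.pi = Real.pi :=
    Real.mul_self_sqrt Real.pi_pos.le
  have hn : (0:ℝ) < (n ! : ℝ) := by positivity
  have hn1 : (0:ℝ) < ((n+1)! : ℝ) := by positivity
  have h4 : (0:ℝ) < (4:ℝ)^n := by positivity
  rw [hcat] at hreal
  have key : ((n+1)! : ℝ) * (n ! : ℝ) * B = ((n+1)! : ℝ) * (n ! : ℝ) *
      (Real.pi * catalan n / (2 * 4^n)) := by
    field_simp at hreal ⊢
    nlinarith [hreal, hpi]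
  have hne : ((n+1)! : ℝ) * (n ! : ℝ) ≠ 0 := by positivity
  exact mul_left_cancel₀ hne key

/-- the `n`-th term profile of the Beta-type integrand. -/
noncomputable def Gfun (n : ℕ) (u : ℝ) : ℝ := u ^ ((n:ℝ) - 1/2) * Real.sqrt (1-u)

/-- the `n`-th term of the series under the integral. -/
noncomputable def Ffun (t : ℝ) (n : ℕ) (u : ℝ) : ℝ := ((4*t)^n / n !) * Gfun n u

lemma Gfun_vanish (n : ℕ) {u : ℝ} (hu : 1 < u) : Gfun n u = 0 := by
  have : Real.sqrt (1-u) = 0 := Real.sqrt_eq_zero'.mpr (by linarith)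
  simp [Gfun, this]

lemma Gfun_continuousOn (n : ℕ) {s : Set ℝ} (hs : ∀ x ∈ s, x ≠ 0) :
    ContinuousOn (Gfun n) s := by
  refine ContinuousOn.mul ?_ ?_
  · exact continuousOn_id.rpow_const (fun x hx => Or.inl (hs x hx))
  · exact (Real.continuous_sqrt.comp (continuous_const.sub continuous_id)).continuousOn

lemma Gfun_norm_le (n : ℕ) {u : ℝ} (hu : u ∈ Ioc (0:ℝ) 1) :
    ‖Gfun n u‖ ≤ u ^ (-(1/2) : ℝ) := by
  have h1 : (0:ℝ) ≤ u ^ ((n:ℝ) - 1/2) := Real.rpow_nonneg hu.1.le _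
  have h2 : (0:ℝ) ≤ Real.sqrt (1-u) := Real.sqrt_nonneg _
  simp only [Gfun, Real.norm_eq_abs]
  rw [abs_of_nonneg (mul_nonneg h1 h2)]
  have h3 : u ^ ((n:ℝ) - 1/2) ≤ u ^ (-(1/2) : ℝ) :=
    Real.rpow_le_rpow_of_exponent_ge hu.1 hu.2 (by
      have : (0:ℝ) ≤ (n:ℝ) := Nat.cast_nonneg n
      linarith)
  have h4 : Real.sqrt (1-u) ≤ 1 := by
    have := Real.sqrt_le_sqrt (show 1-u ≤ 1 by linarith [hu.1])
    simpa [Real.sqrt_one] using this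
  calc u ^ ((n:ℝ) - 1/2) * Real.sqrt (1-u) ≤ u ^ (-(1/2):ℝ) * 1 :=
        mul_le_mul h3 h4 h2 (Real.rpow_nonneg hu.1.le _)
    _ = u ^ (-(1/2):ℝ) := mul_one _

lemma rpow_half_integrableOn : IntegrableOn (fun u : ℝ => u ^ (-(1/2):ℝ)) (Ioc (0:ℝ) 1) := by
  have := intervalIntegral.intervalIntegrable_rpow' (a := 0) (b := 1) (show (-1:ℝ) < -(1/2) by norm_num)
  rwa [intervalIntegrable_iff_integrableOn_Ioc_of_le zero_le_one] at this

lemma Gfun_integrableOn (n : ℕ) : IntegrableOn (Gfun n) (Ioc (0:ℝ) 1) := by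
  refine Integrable.mono' rpow_half_integrableOn ?_ ?_
  · exact (Gfun_continuousOn n (fun x hx => ne_of_gt hx.1)).aestronglyMeasurable
      measurableSet_Ioc
  · exact (ae_restrict_iff' measurableSet_Ioc).mpr
      (Filter.Eventually.of_forall fun u hu => Gfun_norm_le n hu)

lemma integrableOn_Ioi_of_vanish {f : ℝ → ℝ} (hf : ∀ u, 1 < u → f u = 0)
    (hint : IntegrableOn f (Ioc 0 1)) : IntegrableOn f (Ioi (0:ℝ)) := by
  rw [← Ioc_union_Ioi_eq_Ioi (zero_le_one (α := ℝ))]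
  refine hint.union ?_
  exact (integrableOn_congr_fun (fun u hu => hf u hu) measurableSet_Ioi).mpr
    (integrableOn_zero)

lemma setIntegral_Ioi_of_vanish {f : ℝ → ℝ} (hf : ∀ u, 1 < u → f u = 0)
    (hint : IntegrableOn f (Ioc 0 1)) :
    ∫ u in Ioi (0:ℝ), f u = ∫ u in Ioc (0:ℝ) 1, f u := by
  have h2 : IntegrableOn f (Ioi (1:ℝ)) :=
    (integrableOn_congr_fun (fun u hu => hf u hu) measurableSet_Ioi).mpr integrableOn_zero
  rw [← Ioc_union_Ioi_eq_Ioi (zero_le_one (α := ℝ)),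
    setIntegral_union (Ioc_disjoint_Ioi le_rfl) measurableSet_Ioi hint h2]
  have : ∫ u in Ioi (1:ℝ), f u = 0 := by
    rw [setIntegral_congr_fun measurableSet_Ioi (fun u hu => hf u hu)]
    simp
  rw [this, add_zero]

lemma beta_val' (n : ℕ) :
    ∫ u in Ioi (0:ℝ), Gfun n u = Real.pi * catalan n / (2 * 4^n) := by
  rw [setIntegral_Ioi_of_vanish (fun u hu => Gfun_vanish n hu) (Gfun_integrableOn n)]
  rw [← beta_val n]
  refine setIntegral_congr_fun measurableSet_Ioc (fun u hu => ?_)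
  simp only [Gfun]
  rw [Real.sqrt_eq_rpow]

lemma egf_rep (t : ℝ) :
    catalanEGF t = (2/Real.pi) * ∫ u in Ioi (0:ℝ),
      Real.exp (4*t*u) * (u ^ (-(1/2):ℝ) * Real.sqrt (1-u)) := by
  have hexp : ∀ x : ℝ, Real.exp x = ∑' n : ℕ, x ^ n / n ! := by
    intro x
    rw [Real.exp_eq_exp_ℝ, NormedSpace.exp_eq_tsum_div]
  -- pointwise identity
  have step1 : ∀ u ∈ Ioi (0:ℝ),
      (∑' n : ℕ, Ffun t n u) = Real.exp (4*t*u) * (u ^ (-(1/2):ℝ) * Real.sqrt (1-u)) := by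
    intro u hu
    have hu0 : (0:ℝ) < u := hu
    have hpow : ∀ n : ℕ, Ffun t n u =
        ((4*t*u)^n / n !) * (u ^ (-(1/2):ℝ) * Real.sqrt (1-u)) := by
      intro n
      have h1 : u ^ ((n:ℝ) - 1/2) = u ^ (n:ℕ) * u ^ (-(1/2):ℝ) := by
        rw [← Real.rpow_natCast u n, ← Real.rpow_add hu0]
        congr 1 <;> ring
      simp only [Ffun, Gfun]
      rw [h1, mul_pow]
      ring
    calc (∑' n : ℕ, Ffun t n u)
        = ∑' n : ℕ, ((4*t*u)^n / n !) * (u ^ (-(1/2):ℝ) * Real.sqrt (1-u)) :=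
          tsum_congr hpow
      _ = (∑' n : ℕ, (4*t*u)^n / n !) * (u ^ (-(1/2):ℝ) * Real.sqrt (1-u)) := tsum_mul_right
      _ = Real.exp (4*t*u) * (u ^ (-(1/2):ℝ) * Real.sqrt (1-u)) := by rw [← hexp]
  -- integrability of each term
  have hF_int : ∀ n : ℕ, IntegrableOn (Ffun t n) (Ioi (0:ℝ)) := by
    intro n
    refine integrableOn_Ioi_of_vanish (fun u hu => ?_) ?_
    · simp only [Ffun]; rw [Gfun_vanish n hu, mul_zero]
    · exact (Gfun_integrableOn n).const_mul _
  -- summability of integrals of norms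
  set C := ∫ u in Ioc (0:ℝ) 1, u ^ (-(1/2):ℝ) with hC
  have hFnorm : ∀ n : ℕ, (∫ u in Ioi (0:ℝ), ‖Ffun t n u‖) ≤ (|4*t|^n / n !) * C := by
    intro n
    have hv : ∀ u, 1 < u → ‖Ffun t n u‖ = 0 := by
      intro u hu; simp only [Ffun]; rw [Gfun_vanish n hu, mul_zero, norm_zero]
    have hi : IntegrableOn (fun u => ‖Ffun t n u‖) (Ioc (0:ℝ) 1) :=
      ((Gfun_integrableOn n).const_mul _).norm
    rw [setIntegral_Ioi_of_vanish hv hi]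
    have hmono : ∀ u ∈ Ioc (0:ℝ) 1, ‖Ffun t n u‖ ≤ (|4*t|^n / n !) * u ^ (-(1/2):ℝ) := by
      intro u hu
      simp only [Ffun]; rw [norm_mul]
      have h1 : ‖(4*t)^n / (n ! : ℝ)‖ = |4*t|^n / n ! := by
        rw [norm_div, norm_pow, Real.norm_eq_abs, Real.norm_eq_abs, Nat.abs_cast]
      rw [h1]
      exact mul_le_mul_of_nonneg_left (Gfun_norm_le n hu) (by positivity)
    calc ∫ u in Ioc (0:ℝ) 1, ‖Ffun t n u‖
        ≤ ∫ u in Ioc (0:ℝ) 1, (|4*t|^n / n !) * u ^ (-(1/2):ℝ) := by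
          refine setIntegral_mono_on hi (rpow_half_integrableOn.const_mul _)
            measurableSet_Ioc hmono
      _ = (|4*t|^n / n !) * C := by rw [hC, integral_const_mul]
  have hsumm : Summable (fun n : ℕ => ∫ u in Ioi (0:ℝ), ‖Ffun t n u‖) := by
    refine Summable.of_nonneg_of_le
      (fun n => integral_nonneg (fun u => norm_nonneg _)) hFnorm ?_
    exact (Real.summable_pow_div_factorial (|4*t|)).mul_right C
  -- swap sum and integral
  have hswap := MeasureTheory.integral_tsum_of_summable_integral_norm hF_int hsumm
  -- value of each term
  have hterm : ∀ n : ℕ, ∫ u in Ioi (0:ℝ), Ffun t n u =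
      (Real.pi/2) * ((catalan n : ℝ) * t^n / n !) := by
    intro n
    have : ∫ u in Ioi (0:ℝ), Ffun t n u = ((4*t)^n / n !) * ∫ u in Ioi (0:ℝ), Gfun n u := by
      rw [← integral_const_mul]
      rfl
    rw [this, beta_val' n, mul_pow]
    have h4 : ((4:ℝ)^n) ≠ 0 := by positivity
    have hn : ((n:ℕ)! : ℝ) ≠ 0 := by positivity
    field_simp
  have hsum_eval : (∑' n : ℕ, ∫ u in Ioi (0:ℝ), Ffun t n u) = (Real.pi/2) * catalanEGF t := by
    rw [tsum_congr hterm, tsum_mul_left]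
    rfl
  have hfinal : ∫ u in Ioi (0:ℝ), Real.exp (4*t*u) * (u ^ (-(1/2):ℝ) * Real.sqrt (1-u)) =
      (Real.pi/2) * catalanEGF t := by
    rw [← hsum_eval, hswap]
    exact setIntegral_congr_fun measurableSet_Ioi (fun u hu => (step1 u hu).symm)
  rw [hfinal]
  have hpi : Real.pi ≠ 0 := Real.pi_ne_zero
  field_simp

/-- The Laplace-type integral. -/
noncomputable def Jint (T : ℝ) : ℝ :=
  ∫ v in Ioi (0:ℝ), Real.exp (-v) * (v ^ (-(1/2):ℝ) * Real.sqrt (1 - v/(4*T)))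

lemma Jint_tendsto :
    Tendsto Jint atTop (nhds (Real.sqrt Real.pi)) := by
  have hbound_int : IntegrableOn (fun v : ℝ => Real.exp (-v) * v ^ (-(1/2):ℝ)) (Ioi 0) := by
    have := Real.GammaIntegral_convergent (show (0:ℝ) < 1/2 by norm_num)
    have heq : ((1:ℝ)/2 - 1) = -(1/2) := by norm_num
    rwa [heq] at this
  have hlim : ∫ v in Ioi (0:ℝ), Real.exp (-v) * v ^ (-(1/2):ℝ) = Real.sqrt Real.pi := by
    have := Real.Gamma_eq_integral (show (0:ℝ) < 1/2 by norm_num)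
    have heq : ((1:ℝ)/2 - 1) = -(1/2) := by norm_num
    rw [heq] at this
    rw [← this, Real.Gamma_one_half_eq]
  rw [← hlim]
  refine tendsto_integral_filter_of_dominated_convergence
    (fun v => Real.exp (-v) * v ^ (-(1/2):ℝ)) ?_ ?_ hbound_int ?_
  · refine Filter.Eventually.of_forall (fun T => ?_)
    refine ContinuousOn.aestronglyMeasurable ?_ measurableSet_Ioi
    refine (Real.continuous_exp.comp continuous_neg).continuousOn.mul
      (ContinuousOn.mul ?_ ?_)
    · exact continuousOn_id.rpow_const (fun x hx => Or.inl (ne_of_gt hx))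
    · exact (Real.continuous_sqrt.comp
        (continuous_const.sub (continuous_id.div_const _))).continuousOn
  · refine (Filter.eventually_ge_atTop (1:ℝ)).mono (fun T hT => ?_)
    refine (ae_restrict_iff' measurableSet_Ioi).mpr
      (Filter.Eventually.of_forall (fun v hv => ?_))
    have hv0 : (0:ℝ) < v := hv
    have h1 : (0:ℝ) ≤ Real.exp (-v) := (Real.exp_pos _).le
    have h2 : (0:ℝ) ≤ v ^ (-(1/2):ℝ) := Real.rpow_nonneg hv0.le _
    have h3 : (0:ℝ) ≤ Real.sqrt (1 - v/(4*T)) := Real.sqrt_nonneg _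
    have h4 : Real.sqrt (1 - v/(4*T)) ≤ 1 := by
      have hdivnn : 0 ≤ v/(4*T) := div_nonneg hv0.le (by linarith)
      have := Real.sqrt_le_sqrt (show 1 - v/(4*T) ≤ 1 by linarith)
      simpa [Real.sqrt_one] using this
    rw [Real.norm_eq_abs, abs_of_nonneg (by positivity)]
    calc Real.exp (-v) * (v ^ (-(1/2):ℝ) * Real.sqrt (1 - v/(4*T)))
        ≤ Real.exp (-v) * (v ^ (-(1/2):ℝ) * 1) := by
          refine mul_le_mul_of_nonneg_left ?_ h1
          exact mul_le_mul_of_nonneg_left h4 h2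
      _ = Real.exp (-v) * v ^ (-(1/2):ℝ) := by ring
  · refine Filter.Eventually.of_forall (fun v => ?_)
    have hdiv : Tendsto (fun T : ℝ => v/(4*T)) atTop (nhds 0) := by
      have h4 : Tendsto (fun T : ℝ => 4*T) atTop atTop :=
        tendsto_id.const_mul_atTop (by norm_num)
      exact Filter.Tendsto.div_atTop tendsto_const_nhds h4
    have hsqrt : Tendsto (fun T : ℝ => Real.sqrt (1 - v/(4*T))) atTop (nhds 1) := by
      have h1 : Tendsto (fun T : ℝ => 1 - v/(4*T)) atTop (nhds 1) := by
        have := (tendsto_const_nhds :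
          Tendsto (fun _ : ℝ => (1:ℝ)) atTop (nhds 1)).sub hdiv
        simpa using this
      have := (Real.continuous_sqrt.continuousAt (x := (1:ℝ))).tendsto.comp h1
      simp only [Real.sqrt_one] at this
      exact this
    have := hsqrt.const_mul (v ^ (-(1/2):ℝ)) |>.const_mul (Real.exp (-v))
    simpa [mul_assoc] using this

lemma key_eq {T : ℝ} (hT : 0 < T) :
    catalanEGF (-T) * Real.sqrt (Real.pi * T) = (Real.sqrt Real.pi)⁻¹ * Jint T := by
  have h4T : (0:ℝ) < 4*T := by linarith
  set g : ℝ → ℝ := fun v => Real.exp (-v) * (v ^ (-(1/2):ℝ) * Real.sqrt (1 - v/(4*T)))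
    with hg
  have hcomp : ∀ u ∈ Ioi (0:ℝ), g (4*T*u) =
      (4*T) ^ (-(1/2):ℝ) * (Real.exp (4*(-T)*u) * (u ^ (-(1/2):ℝ) * Real.sqrt (1-u))) := by
    intro u hu
    have hu0 : (0:ℝ) < u := hu
    have e1 : (4*T*u) ^ (-(1/2):ℝ) = (4*T) ^ (-(1/2):ℝ) * u ^ (-(1/2):ℝ) :=
      Real.mul_rpow h4T.le hu0.le
    have e2 : 4*T*u/(4*T) = u := by field_simp
    have e3 : -(4*T*u) = 4*(-T)*u := by ring
    simp only [hg]
    rw [e1, e2, e3]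
    ring
  have hchange := MeasureTheory.integral_comp_mul_left_Ioi g 0 h4T
  rw [mul_zero] at hchange
  have hL : ∫ u in Ioi (0:ℝ), g (4*T*u) =
      (4*T) ^ (-(1/2):ℝ) * ∫ u in Ioi (0:ℝ),
        Real.exp (4*(-T)*u) * (u ^ (-(1/2):ℝ) * Real.sqrt (1-u)) := by
    rw [setIntegral_congr_fun measurableSet_Ioi hcomp, integral_const_mul]
  have hJ : ((4*T) : ℝ)⁻¹ * Jint T = (4*T) ^ (-(1/2):ℝ) * ∫ u in Ioi (0:ℝ),
      Real.exp (4*(-T)*u) * (u ^ (-(1/2):ℝ) * Real.sqrt (1-u)) := by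
    rw [← hL]
    rw [hchange, smul_eq_mul]
    rfl
  -- solve for the integral A
  set A := ∫ u in Ioi (0:ℝ), Real.exp (4*(-T)*u) * (u ^ (-(1/2):ℝ) * Real.sqrt (1-u)) with hA
  have hrep := egf_rep (-T)
  rw [← hA] at hrep
  -- (4T)^(-1/2) = (2 √T)⁻¹
  have hsq4T : (4*T) ^ (-(1/2):ℝ) = (2 * Real.sqrt T)⁻¹ := by
    rw [show (-(1/2):ℝ) = -(1/2) by norm_num, Real.rpow_neg h4T.le, ← Real.sqrt_eq_rpow,
      Real.sqrt_mul (by norm_num : (0:ℝ) ≤ 4),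
      show Real.sqrt 4 = 2 by
        rw [show (4:ℝ) = 2^2 by norm_num, Real.sqrt_sq (by norm_num : (0:ℝ) ≤ 2)]]
  have hsT : (0:ℝ) < Real.sqrt T := Real.sqrt_pos.mpr hT
  have hsP : (0:ℝ) < Real.sqrt Real.pi := Real.sqrt_pos.mpr Real.pi_pos
  have hApos : A = (Real.sqrt T)⁻¹ / 2 * Jint T := by
    have h1 : (2 * Real.sqrt T)⁻¹ * A = ((4*T) : ℝ)⁻¹ * Jint T := by
      rw [← hsq4T, hJ, hsq4T]
    have h2 : ((4*T):ℝ) = (2*Real.sqrt T)^2 := by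
      rw [mul_pow, Real.sq_sqrt hT.le]; ring
    rw [h2] at h1
    have h3 : (2 * Real.sqrt T) ≠ 0 := by positivity
    field_simp at h1 ⊢
    nlinarith [h1]
  rw [hrep, hApos]
  rw [Real.sqrt_mul Real.pi_pos.le]
  have hpi : Real.sqrt Real.pi * Real.sqrt Real.pi = Real.pi :=
    Real.mul_self_sqrt Real.pi_pos.le
  field_simp
  linear_combination (Jint T) * hpi

end CatalanAsympt

/-- For the exponential generating function f of the Catalan numbers,
f(t)·√(−π t) tends to 1 as t → −∞; i.e. f(t) ∼ 1/√(−π t) as t → −∞. -/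
theorem catalan_egf_asymptotic_atBot :
    Filter.Tendsto (fun t : ℝ => catalanEGF t * Real.sqrt (-(Real.pi * t)))
      Filter.atBot (nhds 1) := by
  have hsP : (0:ℝ) < Real.sqrt Real.pi := Real.sqrt_pos.mpr Real.pi_pos
  have h1 : Filter.Tendsto (fun t : ℝ => (Real.sqrt Real.pi)⁻¹ * CatalanAsympt.Jint (-t))
      Filter.atBot (nhds 1) := by
    have h2 := (CatalanAsympt.Jint_tendsto.comp tendsto_neg_atBot_atTop).const_mul
      ((Real.sqrt Real.pi)⁻¹)
    rw [inv_mul_cancel₀ hsP.ne'] at h2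
    exact h2
  refine h1.congr' ?_
  filter_upwards [Filter.eventually_lt_atBot (0:ℝ)] with t ht
  have hT : (0:ℝ) < -t := by linarith
  have hk := CatalanAsympt.key_eq hT
  rw [neg_neg] at hk
  rw [show -(Real.pi*t) = Real.pi * -t from by ring, ← hk]
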